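/- Let S be a monoid with zero, λ a nonempty set, and H₁ the group of units of S. For [φ, h, u] ∈ 𝒮_λ × Aut(S) × H₁^λ, the induced automorphism σ_{[φ,h,u]} of B⁰_λ(S), given by (α, s, β) ↦ (φ(α), u(α)·h(s)·(u(β))⁻¹, φ(β)) and 0 ↦ 0, is the identity automorphism if and only if φ is the identity map of λ, u is a constant map with value some ũ ∈ H₁, and h(s) = ũ⁻¹·s·ũ for every s ∈ S. -/

import Mathlib

/-- The Brandt λ⁰-extension `B⁰_Λ(S)` of a semigroup `S` with zero: its underlying
set is `(Λ × (S \ {0_S}) × Λ) ∪ {0}`, where `none` plays the role of the zero `0`. -/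
def Brandt (Λ S : Type*) [Zero S] : Type _ :=
  Option (Λ × {s : S // s ≠ 0} × Λ)

namespace Brandt

variable {Λ S : Type*}

instance [Zero S] : Zero (Brandt Λ S) := ⟨none⟩

open Classical in
/-- `(α, a, β)·(γ, b, δ) = (α, ab, δ)` if `β = γ` and `ab ≠ 0_S`, and `0` otherwise;
`0` is a two-sided zero. -/
noncomputable instance [Zero S] [Mul S] : Mul (Brandt Λ S) :=
  ⟨fun x y =>
    match x, y with
    | some (α, a, β), some (γ, b, δ) =>
        if h : β = γ ∧ a.1 * b.1 ≠ 0 then some (α, ⟨a.1 * b.1, h.2⟩, δ) else 0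
    | _, _ => 0⟩

open Classical in
/-- `Brandt.mk α s β` is the element `(α, s, β)` of `B⁰_Λ(S)` if `s ≠ 0`, and `0` otherwise. -/
noncomputable def mk [Zero S] (α : Λ) (s : S) (β : Λ) : Brandt Λ S :=
  if h : s ≠ 0 then some (α, ⟨s, h⟩, β) else 0

end Brandt

/-- An automorphism of a semigroup: a bijective map preserving the multiplication. -/
def IsSemigroupAut {T : Type*} [Mul T] (σ : T → T) : Prop :=
  Function.Bijective σ ∧ ∀ x y : T, σ (x * y) = σ x * σ y

/-- `brandtAut φ h u` is the automorphism `σ_{[φ,h,u]}` of `B⁰_Λ(S)` given by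
`(α, s, β) ↦ (φ(α), u(α)·h(s)·(u(β))⁻¹, φ(β))` and `0 ↦ 0`. -/
noncomputable def brandtAut {Λ S : Type*} [MonoidWithZero S]
    (φ : Λ ≃ Λ) (h : S ≃* S) (u : Λ → Sˣ) :
    Brandt Λ S → Brandt Λ S
  | some (α, s, β) => Brandt.mk (φ α) ((u α : S) * h s.1 * ((u β)⁻¹ : Sˣ)) (φ β)
  | none => 0

/-- For `[φ, h, u] ∈ 𝒮_Λ × Aut(S) × H₁^Λ`, the induced automorphism `σ_{[φ,h,u]}`
of `B⁰_Λ(S)` is the identity automorphism if and only if `φ` is the identity map of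
`Λ`, `u` is a constant map with value some `ũ ∈ H₁`, and `h(s) = ũ⁻¹·s·ũ` for every
`s ∈ S`. -/
lemma mulequiv_map_zero' {S : Type*} [MonoidWithZero S] (h : S ≃* S) : h 0 = 0 := by
  have : h 0 = h 0 * h (h.symm 0) := by rw [← map_mul, zero_mul]
  simpa using this

theorem stmt_10 {Λ S : Type*} [Nonempty Λ] [MonoidWithZero S] [Nontrivial S]
    (φ : Λ ≃ Λ) (h : S ≃* S) (u : Λ → Sˣ) :
    brandtAut φ h u = id ↔
      (∀ α : Λ, φ α = α) ∧
      ∃ v : Sˣ, (∀ α : Λ, u α = v) ∧ ∀ s : S, h s = (v⁻¹ : Sˣ) * s * (v : S) := by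
  constructor
  · intro H
    have key : ∀ (α β : Λ) (s : S) (hs : s ≠ 0),
        Brandt.mk (φ α) ((u α : S) * h s * ((u β)⁻¹ : Sˣ)) (φ β)
          = (some (α, ⟨s, hs⟩, β) : Brandt Λ S) := fun α β s hs =>
      congrFun H (some (α, ⟨s, hs⟩, β))
    have key' : ∀ (α β : Λ) (s : S) (hs : s ≠ 0),
        φ α = α ∧ (u α : S) * h s * ((u β)⁻¹ : Sˣ) = s ∧ φ β = β := by
      intro α β s hs
      have hk := key α β s hs
      by_cases hne : (u α : S) * h s * ((u β)⁻¹ : Sˣ) ≠ 0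
      · replace hk := (dif_pos hne : Brandt.mk (φ α) ((u α : S) * h s * ((u β)⁻¹ : Sˣ)) (φ β)
          = some (φ α, ⟨_, hne⟩, φ β)).symm.trans hk
        injection hk with hk
        simp only [Prod.mk.injEq, Subtype.mk.injEq] at hk
        exact ⟨hk.1, hk.2.1, hk.2.2⟩
      · simp only [Brandt.mk, hne, ↓reduceDIte] at hk
        exact absurd hk (fun hh => by cases hh)
    have key1 : ∀ α β : Λ, φ α = α ∧ (u α : S) * ((u β)⁻¹ : Sˣ) = 1 := by
      intro α β
      have := key' α β 1 one_ne_zero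
      rw [map_one, mul_one] at this
      exact ⟨this.1, this.2.1⟩
    refine ⟨fun α => (key1 α α).1, u (Classical.arbitrary Λ), ?_, ?_⟩
    · intro α
      have h1 := (key1 α (Classical.arbitrary Λ)).2
      have h2 : u α * (u (Classical.arbitrary Λ))⁻¹ = 1 := Units.ext (by push_cast; simpa using h1)
      exact mul_inv_eq_one.mp h2
    · intro s
      by_cases hs : s = 0
      · subst hs
        simp [mulequiv_map_zero' h]
      · have hq := (key' (Classical.arbitrary Λ) (Classical.arbitrary Λ) s hs).2.1
        conv_rhs => rw [← hq]
        simp [mul_assoc]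
  · rintro ⟨hφ, v, hu, hh⟩
    funext x
    match x with
    | none => rfl
    | some (α, s, β) =>
      show Brandt.mk (φ α) ((u α : S) * h s.1 * ((u β)⁻¹ : Sˣ)) (φ β) = some (α, s, β)
      rw [hφ, hφ, hu, hu, hh]
      have hv : (v : S) * (((v⁻¹ : Sˣ) : S) * s.1 * v) * ((v⁻¹ : Sˣ) : S) = s.1 := by
        simp [mul_assoc]
      rw [hv]
      simp only [Brandt.mk]
      exact dif_pos s.2
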